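/- Let D be a Bayesian network distribution on {0,1}^n whose DAG is topologically ordered by the identity ordering (every node's parents have smaller index), let f : {0,1}^n → ℝ, let 0 ≤ k ≤ n, and let α ⊆ {n−k+1,…,n}. Define g_α : {0,1}^{n−k} → ℝ by g_α(u) = Σ_{β ⊆ {1,…,n−k}} f̂_{β∪α} φ_β(x), where x is any point of {0,1}^n whose first n−k coordinates equal u (φ_β depends only on these coordinates by the ordering assumption). Then for every u ∈ {0,1}^{n−k}, g_α(u) = E[f(u,Y) φ_α(u,Y)], where Y is distributed as the last k coordinates of X ∼ D conditioned on the first n−k coordinates of X equaling u. -/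
import Mathlib


/-!
A Bayesian network (BN) distribution on {0,1}^n: a DAG on [n] (encoded by parent
sets together with a rank function witnessing acyclicity) and, for each node `v`,
a conditional probability `cond v x ∈ (0,1)` of `X_v = 1` given the parent values,
depending only on the coordinates in `pa v`.  The joint distribution is
`prob x = ∏ v, P(x_v | x_{pa v})`, and the BN-induced basis functions are
`φ_v(x) = (x_v − μ_{v,x_pa(v)})/σ_{v,x_pa(v)}`, `φ_S = ∏_{v∈S} φ_v`.
-/

open Finset

noncomputable section

/-- Interpret a Boolean as a real number (`true ↦ 1`, `false ↦ 0`). -/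
def b2r (b : Bool) : ℝ := if b then 1 else 0

/-- A Bayesian network distribution on `{0,1}^n`. -/
structure BayesNet (n : ℕ) where
  /-- parent set of each node -/
  pa : Fin n → Finset (Fin n)
  /-- the parent relation is acyclic (a DAG) -/
  acyclic : ∃ rank : Fin n → ℕ, ∀ v u, u ∈ pa v → rank u < rank v
  /-- `cond v x = P(X_v = 1 | X_{pa v} = x_{pa v})` -/
  cond : Fin n → (Fin n → Bool) → ℝ
  /-- the conditional probability of `v` depends only on the parents of `v` -/
  cond_local : ∀ v x y, (∀ u ∈ pa v, x u = y u) → cond v x = cond v y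
  cond_pos : ∀ v x, 0 < cond v x
  cond_lt_one : ∀ v x, cond v x < 1

namespace BayesNet

variable {n : ℕ}

/-- The joint probability mass function `D(x) = ∏_v P(x_v | x_{pa v})`. -/
def prob (B : BayesNet n) (x : Fin n → Bool) : ℝ :=
  ∏ v, if x v then B.cond v x else 1 - B.cond v x

/-- Conditional standard deviation `σ_{v, x_{pa v}}`. -/
def sigma (B : BayesNet n) (v : Fin n) (x : Fin n → Bool) : ℝ :=
  Real.sqrt (B.cond v x * (1 - B.cond v x))

/-- BN-induced basis function of a single node. -/
def phi (B : BayesNet n) (v : Fin n) (x : Fin n → Bool) : ℝ :=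
  (b2r (x v) - B.cond v x) / B.sigma v x

/-- BN-induced basis function `φ_S = ∏_{v ∈ S} φ_v` (with `φ_∅ ≡ 1`). -/
def phiS (B : BayesNet n) (S : Finset (Fin n)) (x : Fin n → Bool) : ℝ :=
  ∏ v ∈ S, B.phi v x

/-- Expectation with respect to the BN distribution. -/
def expect (B : BayesNet n) (g : (Fin n → Bool) → ℝ) : ℝ :=
  ∑ x, B.prob x * g x

/-- Fourier coefficient `f̂_S = E_D[f(X) φ_S(X)]`. -/
def coeff (B : BayesNet n) (f : (Fin n → Bool) → ℝ) (S : Finset (Fin n)) : ℝ :=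
  B.expect fun x => f x * B.phiS S x

/-- Conditional expectation `E[g(X) | X_u = y_u for all u ∈ A]`. -/
def condExp (B : BayesNet n) (g : (Fin n → Bool) → ℝ) (A : Finset (Fin n))
    (y : Fin n → Bool) : ℝ :=
  (∑ x ∈ univ.filter (fun x : Fin n → Bool => ∀ u ∈ A, x u = y u), B.prob x * g x) /
  (∑ x ∈ univ.filter (fun x : Fin n → Bool => ∀ u ∈ A, x u = y u), B.prob x)

/-- The union of the parent sets of the nodes of `S`. -/
def paS (B : BayesNet n) (S : Finset (Fin n)) : Finset (Fin n) := S.biUnion B.pa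

/-- Spectral norm `L1(f) = Σ_S |f̂_S|`. -/
def L1 (B : BayesNet n) (f : (Fin n → Bool) → ℝ) : ℝ :=
  ∑ S : Finset (Fin n), |B.coeff f S|

end BayesNet


namespace BayesNet

variable {n : ℕ}

/-- Single-node factor `P(x_v | x_{pa v})`. -/
def term (B : BayesNet n) (v : Fin n) (x : Fin n → Bool) : ℝ :=
  if x v then B.cond v x else 1 - B.cond v x

lemma term_pos (B : BayesNet n) (v : Fin n) (x : Fin n → Bool) : 0 < B.term v x := by
  unfold term
  split
  · exact B.cond_pos v x
  · linarith [B.cond_lt_one v x]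

lemma prob_eq_prod_term (B : BayesNet n) (x : Fin n → Bool) :
    B.prob x = ∏ v, B.term v x := rfl

lemma sigma_mul_self (B : BayesNet n) (v : Fin n) (x : Fin n → Bool) :
    B.sigma v x * B.sigma v x = B.cond v x * (1 - B.cond v x) := by
  have h0 : 0 ≤ B.cond v x * (1 - B.cond v x) :=
    mul_nonneg (le_of_lt (B.cond_pos v x)) (by linarith [B.cond_lt_one v x])
  exact Real.mul_self_sqrt h0

lemma sigma_pos (B : BayesNet n) (v : Fin n) (x : Fin n → Bool) : 0 < B.sigma v x :=
  Real.sqrt_pos.mpr (mul_pos (B.cond_pos v x) (by linarith [B.cond_lt_one v x]))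

lemma one_add_phi_mul_self (B : BayesNet n) (v : Fin n) (x : Fin n → Bool) :
    1 + B.phi v x * B.phi v x = (B.term v x)⁻¹ := by
  have hσ := B.sigma_mul_self v x
  have hσ0 : B.sigma v x ≠ 0 := ne_of_gt (B.sigma_pos v x)
  have hc0 : B.cond v x ≠ 0 := ne_of_gt (B.cond_pos v x)
  have hc1 : (1 : ℝ) - B.cond v x ≠ 0 := by
    have := B.cond_lt_one v x; intro h; linarith
  have key : B.phi v x * B.phi v x
      = (b2r (x v) - B.cond v x) * (b2r (x v) - B.cond v x)
        / (B.cond v x * (1 - B.cond v x)) := by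
    unfold phi
    rw [div_mul_div_comm, hσ]
  have hb0 : b2r false = 0 := rfl
  have hb1 : b2r true = 1 := rfl
  cases hxv : x v
  · have ht : B.term v x = 1 - B.cond v x := by simp [term, hxv]
    rw [ht, key, hxv, hb0, add_div' _ _ _ (mul_ne_zero hc0 hc1), inv_eq_one_div,
      div_eq_div_iff (mul_ne_zero hc0 hc1) hc1]
    ring
  · have ht : B.term v x = B.cond v x := by simp [term, hxv]
    rw [ht, key, hxv, hb1, add_div' _ _ _ (mul_ne_zero hc0 hc1), inv_eq_one_div,
      div_eq_div_iff (mul_ne_zero hc0 hc1) hc0]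
    ring

lemma phi_mul_phi_of_ne (B : BayesNet n) (v : Fin n) (x u : Fin n → Bool)
    (hc : B.cond v x = B.cond v u) (hne : x v ≠ u v) :
    B.phi v x * B.phi v u = -1 := by
  have hσ : B.sigma v x = B.sigma v u := by unfold sigma; rw [hc]
  have hs := B.sigma_mul_self v u
  have hc0 : B.cond v u ≠ 0 := ne_of_gt (B.cond_pos v u)
  have hc1 : (1 : ℝ) - B.cond v u ≠ 0 := by
    have := B.cond_lt_one v u; intro h; linarith
  unfold phi
  rw [hσ, hc, div_mul_div_comm, hs]
  have hb0 : b2r false = 0 := rfl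
  have hb1 : b2r true = 1 := rfl
  cases hxv : x v <;> cases huv : u v
  · exact absurd (hxv.trans huv.symm) hne
  · rw [hb0, hb1, div_eq_iff (mul_ne_zero hc0 hc1)]; ring
  · rw [hb1, hb0, div_eq_iff (mul_ne_zero hc0 hc1)]; ring
  · exact absurd (hxv.trans huv.symm) hne

/-- Marginalization: summing the tail factors over all assignments to the tail
coordinates (head fixed) gives `1`. -/
lemma marg (B : BayesNet n) (hord : ∀ v u, u ∈ B.pa v → u < v) (d : ℕ) :
    ∀ u : Fin n → Bool,
    (∑ x ∈ univ.filter (fun x : Fin n → Bool => ∀ i : Fin n, (i : ℕ) < n - d → x i = u i),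
      ∏ v ∈ univ.filter (fun v : Fin n => n - d ≤ (v : ℕ)), B.term v x) = 1 := by
  induction d with
  | zero =>
    intro u
    have h1 : univ.filter (fun x : Fin n → Bool => ∀ i : Fin n, (i : ℕ) < n - 0 → x i = u i)
        = {u} := by
      ext x
      simp only [Finset.mem_filter, Finset.mem_univ, true_and, Finset.mem_singleton]
      constructor
      · intro h; funext i; exact h i i.isLt
      · intro h i _; rw [h]
    have h2 : univ.filter (fun v : Fin n => n - 0 ≤ (v : ℕ)) = (∅ : Finset (Fin n)) := by
      ext v
      simp only [Finset.mem_filter, Finset.mem_univ, true_and, Finset.notMem_empty,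
        iff_false, not_le, Nat.sub_zero]
      exact v.isLt
    rw [h1, h2]
    simp
  | succ d ih =>
    intro u
    by_cases hd : n ≤ d
    · have : n - (d + 1) = n - d := by omega
      rw [this]
      exact ih u
    · push_neg at hd
      set m : ℕ := n - (d + 1) with hm
      have hmn : m < n := by omega
      have hm1 : m + 1 = n - d := by omega
      set vm : Fin n := ⟨m, hmn⟩ with hvm
      have hvmval : (vm : ℕ) = m := rfl
      -- set equality: split according to the value at vm
      have hsetsplit :
          univ.filter (fun x : Fin n → Bool => ∀ i : Fin n, (i : ℕ) < m → x i = u i)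
            = (univ.filter (fun x : Fin n → Bool =>
                ∀ i : Fin n, (i : ℕ) < m + 1 → x i = Function.update u vm true i)) ∪
              (univ.filter (fun x : Fin n → Bool =>
                ∀ i : Fin n, (i : ℕ) < m + 1 → x i = Function.update u vm false i)) := by
        ext x
        simp only [Finset.mem_union, Finset.mem_filter, Finset.mem_univ, true_and]
        constructor
        · intro h
          cases hx : x vm with
          | true =>
            left
            intro i hi
            rcases Nat.lt_or_ge (i : ℕ) m with h' | h'
            · rw [Function.update_of_ne (by intro he; rw [he] at h'; omega), h i h']
            · have : i = vm := by
                apply Fin.ext; rw [hvmval]; omega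
              rw [this, Function.update_self, hx]
          | false =>
            right
            intro i hi
            rcases Nat.lt_or_ge (i : ℕ) m with h' | h'
            · rw [Function.update_of_ne (by intro he; rw [he] at h'; omega), h i h']
            · have : i = vm := by
                apply Fin.ext; rw [hvmval]; omega
              rw [this, Function.update_self, hx]
        · rintro (h | h) <;>
          · intro i hi
            have hne : i ≠ vm := by
              intro he; rw [he] at hi; omega
            have := h i (by omega)
            rwa [Function.update_of_ne hne] at this
      have hdisj : Disjoint
          (univ.filter (fun x : Fin n → Bool =>
            ∀ i : Fin n, (i : ℕ) < m + 1 → x i = Function.update u vm true i))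
          (univ.filter (fun x : Fin n → Bool =>
            ∀ i : Fin n, (i : ℕ) < m + 1 → x i = Function.update u vm false i)) := by
        rw [Finset.disjoint_left]
        intro x hx hx'
        simp only [Finset.mem_filter, Finset.mem_univ, true_and] at hx hx'
        have h1 := hx vm (by omega)
        have h2 := hx' vm (by omega)
        rw [Function.update_self] at h1 h2
        rw [h1] at h2
        exact Bool.noConfusion h2
      -- prod set: insert
      have hprodset : univ.filter (fun v : Fin n => m ≤ (v : ℕ))
          = insert vm (univ.filter (fun v : Fin n => m + 1 ≤ (v : ℕ))) := by
        ext v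
        simp only [Finset.mem_filter, Finset.mem_univ, true_and, Finset.mem_insert]
        constructor
        · intro h
          rcases Nat.eq_or_lt_of_le h with h' | h'
          · left; apply Fin.ext; rw [hvmval]; omega
          · right; omega
        · rintro (h | h)
          · have : (v : ℕ) = m := by rw [h, hvmval]
            omega
          · omega
      have hvmnot : vm ∉ univ.filter (fun v : Fin n => m + 1 ≤ (v : ℕ)) := by
        simp only [Finset.mem_filter, Finset.mem_univ, true_and, not_le]
        omega
      -- per-branch computation
      have hbranch : ∀ b : Bool,
          (∑ x ∈ univ.filter (fun x : Fin n → Bool =>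
              ∀ i : Fin n, (i : ℕ) < m + 1 → x i = Function.update u vm b i),
            ∏ v ∈ univ.filter (fun v : Fin n => m ≤ (v : ℕ)), B.term v x)
          = B.term vm (Function.update u vm b) := by
        intro b
        have : ∀ x ∈ univ.filter (fun x : Fin n → Bool =>
              ∀ i : Fin n, (i : ℕ) < m + 1 → x i = Function.update u vm b i),
            (∏ v ∈ univ.filter (fun v : Fin n => m ≤ (v : ℕ)), B.term v x)
              = B.term vm (Function.update u vm b)
                * ∏ v ∈ univ.filter (fun v : Fin n => m + 1 ≤ (v : ℕ)), B.term v x := by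
          intro x hx
          simp only [Finset.mem_filter, Finset.mem_univ, true_and] at hx
          rw [hprodset, Finset.prod_insert hvmnot]
          congr 1
          have hcond : B.cond vm x = B.cond vm (Function.update u vm b) := by
            apply B.cond_local
            intro w hw
            have hwlt : (w : ℕ) < m := by
              have h2 := hord vm w hw
              rw [Fin.lt_def, hvmval] at h2
              exact h2
            exact hx w (by omega)
          have hxvm : x vm = b := by
            have := hx vm (by omega)
            rwa [Function.update_self] at this
          unfold term
          rw [hcond, hxvm, Function.update_self]
        rw [Finset.sum_congr rfl this, ← Finset.mul_sum]
        have := ih (Function.update u vm b)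
        rw [← hm1] at this
        rw [this, mul_one]
      rw [hsetsplit, Finset.sum_union hdisj, hbranch true, hbranch false]
      have hcc : B.cond vm (Function.update u vm true)
          = B.cond vm (Function.update u vm false) := by
        apply B.cond_local
        intro w hw
        have hne : w ≠ vm := by
          intro he
          have := hord vm w hw
          rw [he] at this
          exact lt_irrefl _ this
        rw [Function.update_of_ne hne, Function.update_of_ne hne]
      unfold term
      rw [Function.update_self, Function.update_self, if_pos rfl, if_neg (by simp)]
      rw [hcc]
      ring

/-- The kernel identity. -/
lemma kernel (B : BayesNet n) (hord : ∀ v u, u ∈ B.pa v → u < v) (m : ℕ) (hmn : m ≤ n)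
    (x u : Fin n → Bool) :
    (∏ v ∈ univ.filter (fun v : Fin n => (v : ℕ) < m), (1 + B.phi v x * B.phi v u))
      = if (∀ i : Fin n, (i : ℕ) < m → x i = u i)
        then (∏ v ∈ univ.filter (fun v : Fin n => (v : ℕ) < m), B.term v u)⁻¹
        else 0 := by
  split_ifs with h
  · rw [← Finset.prod_inv_distrib]
    apply Finset.prod_congr rfl
    intro v hv
    simp only [Finset.mem_filter, Finset.mem_univ, true_and] at hv
    have hxv : x v = u v := h v hv
    have hc : B.cond v x = B.cond v u := by
      apply B.cond_local
      intro w hw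
      refine h w (lt_trans ?_ hv)
      have h2 := hord v w hw
      rwa [Fin.lt_def] at h2
    have hphi : B.phi v x = B.phi v u := by
      unfold phi sigma
      rw [hc, hxv]
    rw [hphi]
    exact B.one_add_phi_mul_self v u
  · push_neg at h
    obtain ⟨i0, hi0, hne0⟩ := h
    have hDne : (univ.filter (fun v : Fin n => (v : ℕ) < m ∧ x v ≠ u v)).Nonempty :=
      ⟨i0, by simp [hi0, hne0]⟩
    set v0 := (univ.filter (fun v : Fin n => (v : ℕ) < m ∧ x v ≠ u v)).min' hDne with hv0
    have hv0mem := (univ.filter (fun v : Fin n => (v : ℕ) < m ∧ x v ≠ u v)).min'_mem hDne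
    rw [← hv0] at hv0mem
    simp only [Finset.mem_filter, Finset.mem_univ, true_and] at hv0mem
    apply Finset.prod_eq_zero (i := v0)
    · simp [hv0mem.1]
    · have hc : B.cond v0 x = B.cond v0 u := by
        apply B.cond_local
        intro w hw
        by_contra hne
        have hwlt : w < v0 := hord v0 w hw
        have hwm : (w : ℕ) < m := by
          have h2 := hwlt
          rw [Fin.lt_def] at h2
          exact lt_trans h2 hv0mem.1
        have : v0 ≤ w := Finset.min'_le _ w (by simp [hwm, hne])
        exact absurd hwlt (not_lt.mpr this)
      rw [B.phi_mul_phi_of_ne v0 x u hc hv0mem.2]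
      ring

end BayesNet

/-- cf. Lemma 3.2 of Kushilevitz–Mansour, generalized. Assume the
DAG is topologically ordered by the identity ordering (parents have smaller index).
Let `0 ≤ k ≤ n` and let `α` be a set of indices among the last `k` coordinates.
Then for every `u`, the partial-spectrum function
`g_α(u) = Σ_{β ⊆ first n−k coords} f̂_{β∪α} φ_β(u)` equals the conditional
expectation `E[f(uY) φ_α(uY)]`, where `Y` is the last `k` coordinates of `X ∼ D`
conditioned on the first `n−k` coordinates equaling `u`. -/
theorem bn_km_partial_spectrum {n : ℕ} (B : BayesNet n)
    (hord : ∀ v u, u ∈ B.pa v → u < v)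
    (f : (Fin n → Bool) → ℝ) (k : ℕ) (hk : k ≤ n)
    (α : Finset (Fin n)) (hα : ∀ i ∈ α, n - k ≤ (i : ℕ))
    (u : Fin n → Bool) :
    (∑ β ∈ univ.filter (fun β : Finset (Fin n) => ∀ i ∈ β, (i : ℕ) < n - k),
        B.coeff f (β ∪ α) * B.phiS β u)
      = B.condExp (fun x => f x * B.phiS α x)
          (univ.filter (fun i : Fin n => (i : ℕ) < n - k)) u := by
  classical
  set m := n - k with hm
  set A : Finset (Fin n) := univ.filter (fun i : Fin n => (i : ℕ) < m) with hA
  -- index set equals powerset of A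
  have hidx : univ.filter (fun β : Finset (Fin n) => ∀ i ∈ β, (i : ℕ) < m) = A.powerset := by
    ext β
    simp only [Finset.mem_filter, Finset.mem_univ, true_and, Finset.mem_powerset,
      Finset.subset_iff, hA]
  -- disjointness and product splitting
  have hsplit : ∀ β ∈ A.powerset, ∀ x, B.phiS (β ∪ α) x = B.phiS β x * B.phiS α x := by
    intro β hβ x
    rw [Finset.mem_powerset] at hβ
    have hdisj : Disjoint β α := by
      rw [Finset.disjoint_left]
      intro i hiβ hiα
      have h1 : (i : ℕ) < m := by
        have := hβ hiβ
        simpa [hA] using this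
      have h2 := hα i hiα
      omega
    unfold BayesNet.phiS
    exact Finset.prod_union hdisj
  -- the filter set for the condExp
  have hFeq : univ.filter (fun x : Fin n → Bool => ∀ i ∈ A, x i = u i)
      = univ.filter (fun x : Fin n → Bool => ∀ i : Fin n, (i : ℕ) < m → x i = u i) := by
    ext x
    simp [hA]
  set F := univ.filter (fun x : Fin n → Bool => ∀ i : Fin n, (i : ℕ) < m → x i = u i)
    with hF
  set PA : ℝ := ∏ v ∈ A, B.term v u with hPA
  have hPApos : 0 < PA := Finset.prod_pos fun v _ => B.term_pos v u
  -- denominator equals PA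
  have hDen : (∑ x ∈ F, B.prob x) = PA := by
    have hstep : ∀ x ∈ F, B.prob x
        = PA * ∏ v ∈ univ.filter (fun v : Fin n => m ≤ (v : ℕ)), B.term v x := by
      intro x hx
      simp only [hF, Finset.mem_filter, Finset.mem_univ, true_and] at hx
      rw [B.prob_eq_prod_term]
      have hsplitprod : (∏ v, B.term v x)
          = (∏ v ∈ univ.filter (fun v : Fin n => (v : ℕ) < m), B.term v x)
            * ∏ v ∈ univ.filter (fun v : Fin n => ¬ ((v : ℕ) < m)), B.term v x :=
        (Finset.prod_filter_mul_prod_filter_not univ _ _).symm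
      rw [hsplitprod]
      congr 1
      · rw [hPA, hA]
        apply Finset.prod_congr rfl
        intro v hv
        simp only [Finset.mem_filter, Finset.mem_univ, true_and] at hv
        have hcond : B.cond v x = B.cond v u := by
          apply B.cond_local
          intro w hw
          refine hx w (lt_trans ?_ hv)
          have h2 := hord v w hw
          rwa [Fin.lt_def] at h2
        unfold BayesNet.term
        rw [hcond, hx v hv]
      · apply Finset.prod_congr
        · ext v; simp [not_lt]
        · intro v _; rfl
    rw [Finset.sum_congr rfl hstep, ← Finset.mul_sum]
    have hmarg := B.marg hord k u
    rw [← hm] at hmarg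
    rw [hmarg, mul_one]
  -- main computation
  have hLHS : (∑ β ∈ univ.filter (fun β : Finset (Fin n) => ∀ i ∈ β, (i : ℕ) < m),
        B.coeff f (β ∪ α) * B.phiS β u)
      = ∑ x, B.prob x * (f x * B.phiS α x)
          * ∏ v ∈ A, (1 + B.phi v x * B.phi v u) := by
    rw [hidx]
    unfold BayesNet.coeff BayesNet.expect
    simp_rw [Finset.sum_mul]
    rw [Finset.sum_comm]
    apply Finset.sum_congr rfl
    intro x _
    have hker : (∏ v ∈ A, (1 + B.phi v x * B.phi v u))
        = ∑ β ∈ A.powerset, ∏ v ∈ β, (B.phi v x * B.phi v u) := by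
      have := Finset.prod_add (fun v => B.phi v x * B.phi v u) (fun _ => (1 : ℝ)) A
      simp only [Finset.prod_const_one, mul_one] at this
      rw [← this]
      apply Finset.prod_congr rfl
      intro v _
      ring
    rw [hker, Finset.mul_sum]
    apply Finset.sum_congr rfl
    intro β hβ
    rw [hsplit β hβ x]
    unfold BayesNet.phiS
    rw [Finset.prod_mul_distrib]
    ring
  rw [hLHS]
  have hA' : A = univ.filter (fun v : Fin n => (v : ℕ) < m) := hA
  have hxker : ∀ x : Fin n → Bool, (∏ v ∈ A, (1 + B.phi v x * B.phi v u))
      = if (∀ i : Fin n, (i : ℕ) < m → x i = u i) then PA⁻¹ else 0 := by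
    intro x
    rw [hA', hPA, hA']
    exact B.kernel hord m (by omega) x u
  have hsum : (∑ x, B.prob x * (f x * B.phiS α x) * ∏ v ∈ A, (1 + B.phi v x * B.phi v u))
      = (∑ x ∈ F, B.prob x * (f x * B.phiS α x)) * PA⁻¹ := by
    rw [Finset.sum_mul]
    rw [hF, Finset.sum_filter]
    apply Finset.sum_congr rfl
    intro x _
    rw [hxker x]
    split_ifs with h
    · ring
    · ring
  rw [hsum]
  unfold BayesNet.condExp
  rw [hFeq, hDen, div_eq_mul_inv]
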